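/- For all integers a, b, c, d, e: (J(d−c)·j(e−b) − J(e−c)·j(d−b))·J(c−a) = (J(e−a)·J(d−c) − J(d−a)·J(e−c))·j(c−b). -/

import Mathlib

private lemma jac_ext (g h : ℤ → ℚ) (h0 : g 0 = h 0) (h1 : g 1 = h 1)
    (hg : ∀ n : ℤ, g n = g (n - 1) + 2 * g (n - 2))
    (hh : ∀ n : ℤ, h n = h (n - 1) + 2 * h (n - 2)) : ∀ n : ℤ, g n = h n := by
  have key : ∀ n : ℤ, g n = h n ∧ g (n + 1) = h (n + 1) := by
    intro n
    induction n using Int.induction_on with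
    | zero => exact ⟨h0, h1⟩
    | succ k ih =>
        refine ⟨ih.2, ?_⟩
        have e1 := hg (k + 1 + 1)
        have e2 := hh (k + 1 + 1)
        rw [show ((k:ℤ) + 1 + 1 - 1) = k + 1 by ring, show ((k:ℤ) + 1 + 1 - 2) = k by ring] at e1 e2
        rw [e1, e2, ih.1, ih.2]
    | pred k ih =>
        have e1 := hg (-k + 1)
        have e2 := hh (-k + 1)
        rw [show ((-k:ℤ) + 1 - 1) = -k by ring, show ((-k:ℤ) + 1 - 2) = -(k+1) by ring] at e1 e2
        refine ⟨?_, ?_⟩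
        · rw [show ((-k:ℤ) - 1) = -(k+1) by ring]
          linarith [ih.1, ih.2]
        · rw [show ((-k:ℤ) - 1 + 1) = -k by ring]; exact ih.1
  exact fun n => (key n).1
private lemma Jclosed (J : ℤ → ℚ) (hJ0 : J 0 = 0) (hJ1 : J 1 = 1)
    (hJ : ∀ n : ℤ, J n = J (n - 1) + 2 * J (n - 2)) :
    ∀ n : ℤ, J n = ((2:ℚ)^n - (-1:ℚ)^n) / 3 := by
  apply jac_ext J (fun n => ((2:ℚ)^n - (-1:ℚ)^n) / 3)
  · simpa using hJ0
  · norm_num [hJ1]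
  · exact hJ
  · intro n
    simp only [zpow_sub₀ (by norm_num : (2:ℚ) ≠ 0),
      zpow_sub₀ (by norm_num : (-1:ℚ) ≠ 0)]
    norm_num
    ring

private lemma jclosed (j : ℤ → ℚ) (hj0 : j 0 = 2) (hj1 : j 1 = 1)
    (hj : ∀ n : ℤ, j n = j (n - 1) + 2 * j (n - 2)) :
    ∀ n : ℤ, j n = (2:ℚ)^n + (-1:ℚ)^n := by
  apply jac_ext j (fun n => (2:ℚ)^n + (-1:ℚ)^n)
  · norm_num [hj0]
  · norm_num [hj1]
  · exact hj
  · intro n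
    simp only [zpow_sub₀ (by norm_num : (2:ℚ) ≠ 0),
      zpow_sub₀ (by norm_num : (-1:ℚ) ≠ 0)]
    norm_num
    ring

/-- Corollary identity for Jacobsthal and Jacobsthal–Lucas numbers. -/
theorem stmt_8 (J j : ℤ → ℚ)
    (hJ0 : J 0 = 0) (hJ1 : J 1 = 1)
    (hJ : ∀ n : ℤ, J n = J (n - 1) + 2 * J (n - 2))
    (hj0 : j 0 = 2) (hj1 : j 1 = 1)
    (hj : ∀ n : ℤ, j n = j (n - 1) + 2 * j (n - 2))
    (a b c d e : ℤ) :
    (J (d - c) * j (e - b) - J (e - c) * j (d - b)) * J (c - a)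
      = (J (e - a) * J (d - c) - J (d - a) * J (e - c)) * j (c - b) := by
  have HJ := Jclosed J hJ0 hJ1 hJ
  have Hj := jclosed j hj0 hj1 hj
  rw [show e - b = (e - c) + (c - b) by ring, show d - b = (d - c) + (c - b) by ring,
    show e - a = (e - c) + (c - a) by ring, show d - a = (d - c) + (c - a) by ring]
  simp only [HJ, Hj, zpow_add₀ (by norm_num : (2:ℚ) ≠ 0),
    zpow_add₀ (by norm_num : (-1:ℚ) ≠ 0)]
  have h2 : ∀ m : ℤ, (2:ℚ)^m ≠ 0 := fun m => zpow_ne_zero m (by norm_num)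
  rcases Int.even_or_odd (c - a) with h1 | h1 <;>
  rcases Int.even_or_odd (c - b) with h3 | h3 <;>
  rcases Int.even_or_odd (d - c) with h4 | h4 <;>
  rcases Int.even_or_odd (e - c) with h5 | h5 <;>
    simp only [h1.neg_one_zpow, h3.neg_one_zpow, h4.neg_one_zpow, h5.neg_one_zpow] <;>
    ring
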